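/- Let N and D be finite sets, let ρ : N → ℤ satisfy ρ(n)² = 1 for all n, let w : D → ℤ and i : D → ℤ, and let ℓ₊, ℓ₋ : D → N and J : N → ℤ satisfy J(ℓ₊(d)) = 2·i(d) + 1 and J(ℓ₋(d)) = 2·i(d) − 1 for every d ∈ D. Define α : N → ℤ by α(n) = ρ(n)·( Σ_{d : ℓ₊(d)=n} w(d) + Σ_{d : ℓ₋(d)=n} w(d) ). Then the Laurent polynomial Σ_{n∈N} α(n)·ρ(n)·t^{J(n)} ∈ ℤ[t, t⁻¹] is divisible by (t + t⁻¹), and the quotient equals Σ_{d∈D} w(d)·t^{2·i(d)}, i.e. the quotient is the image of the Laurent polynomial Σ_{d∈D} w(d)·q^{i(d)} ∈ ℤ[q, q⁻¹] under the ring homomorphism sending q to t². -/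

import Mathlib

open LaurentPolynomial Finset

lemma phi_single (f : ℤ →+ ℤ) (r : ℤ) (m : ℤ) :
    AddMonoidAlgebra.mapDomainRingHom ℤ f (C r * T m) = C r * T (f m) := by
  rw [← single_eq_C_mul_T, ← single_eq_C_mul_T]
  show AddMonoidAlgebra.mapDomain f _ = _
  exact AddMonoidAlgebra.mapDomain_single

/-- The quantized Arnold strangeness is a genuine Laurent polynomial in `q`:
the sum `Σ_n α n · ρ n · t^(J n)` is divisible by `t + t⁻¹` in `ℤ[t, t⁻¹]`,
and the quotient is the image of `Σ_d w d · q^(i d) ∈ ℤ[q, q⁻¹]` under the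
ring homomorphism sending `q` to `t²` (i.e. doubling exponents). -/
theorem sum_alpha_rho_T_div
    (N D : Type*) [Fintype N] [Fintype D] [DecidableEq N]
    (ρ : N → ℤ) (hρ : ∀ n, ρ n ^ 2 = 1)
    (w : D → ℤ) (i : D → ℤ)
    (ℓp ℓm : D → N) (J : N → ℤ)
    (hJp : ∀ d, J (ℓp d) = 2 * i d + 1)
    (hJm : ∀ d, J (ℓm d) = 2 * i d - 1)
    (α : N → ℤ)
    (hα : ∀ n, α n = ρ n *
      ((∑ d ∈ Finset.univ.filter fun d => ℓp d = n, w d) +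
       (∑ d ∈ Finset.univ.filter fun d => ℓm d = n, w d)))
    -- the ring homomorphism `ℤ[q, q⁻¹] → ℤ[t, t⁻¹]`, `q ↦ t²`
    (φ : LaurentPolynomial ℤ →+* LaurentPolynomial ℤ)
    (hφ : φ = AddMonoidAlgebra.mapDomainRingHom ℤ
      ({ toFun := fun n : ℤ => 2 * n,
         map_zero' := by simp,
         map_add' := by intro a b; ring } : ℤ →+ ℤ)) :
    (T 1 + T (-1)) ∣ (∑ n : N, C (α n * ρ n) * T (J n)) ∧
      ∑ n : N, C (α n * ρ n) * T (J n) =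
        (T 1 + T (-1)) * φ (∑ d : D, C (w d) * T (i d)) := by
  have key : ∑ n : N, C (α n * ρ n) * T (J n) =
      (T 1 + T (-1)) * φ (∑ d : D, C (w d) * T (i d)) := by
    have hαρ : ∀ n, α n * ρ n =
        (∑ d ∈ Finset.univ.filter fun d => ℓp d = n, w d) +
        (∑ d ∈ Finset.univ.filter fun d => ℓm d = n, w d) := by
      intro n
      have h : α n * ρ n = ρ n ^ 2 *
          ((∑ d ∈ Finset.univ.filter fun d => ℓp d = n, w d) +
           (∑ d ∈ Finset.univ.filter fun d => ℓm d = n, w d)) := by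
        rw [hα n]; ring
      rw [h, hρ n, one_mul]
    calc ∑ n : N, C (α n * ρ n) * T (J n)
        = ∑ n : N, ((∑ d ∈ Finset.univ.filter fun d => ℓp d = n,
              C (w d) * T (J (ℓp d))) +
            (∑ d ∈ Finset.univ.filter fun d => ℓm d = n,
              C (w d) * T (J (ℓm d)))) := by
          refine Finset.sum_congr rfl fun n _ => ?_
          rw [hαρ n, map_add, add_mul]
          simp only [map_sum, Finset.sum_mul]
          congr 1 <;> refine Finset.sum_congr rfl fun d hd => ?_ <;>
            simp only [Finset.mem_filter] at hd <;> rw [hd.2]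
      _ = (∑ d : D, C (w d) * T (J (ℓp d))) +
          (∑ d : D, C (w d) * T (J (ℓm d))) := by
          rw [Finset.sum_add_distrib]
          congr 1 <;> exact Finset.sum_fiberwise _ _ _
      _ = ∑ d : D, C (w d) * (T (2 * i d) * (T 1 + T (-1))) := by
          rw [← Finset.sum_add_distrib]
          refine Finset.sum_congr rfl fun d _ => ?_
          rw [hJp d, hJm d, mul_add, mul_add, ← T_add, ← T_add]
          ring_nf
      _ = (T 1 + T (-1)) * φ (∑ d : D, C (w d) * T (i d)) := by
          rw [hφ, map_sum, Finset.mul_sum]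
          refine Finset.sum_congr rfl fun d _ => ?_
          rw [phi_single]
          simp only [AddMonoidHom.coe_mk, ZeroHom.coe_mk]
          ring
  exact ⟨⟨_, key⟩, key⟩
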